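/- arXiv:1908.06250 — 2 statements merged into one kernel-verified Lean document; each statement's English description precedes it below -/
import Mathlib

section
/- Let G be a strongly connected signed digraph and let L̂ = (W·L + Lᵀ·W)/2 be its mirror Laplacian, a real symmetric matrix with real eigenvalues λ_1(L̂) ≤ λ_2(L̂) ≤ … ≤ λ_n(L̂) listed in increasing order with multiplicity. Then G is structurally unbalanced if and only if 0 < λ_1(L̂); that is, if and only if L̂ is positive definite. -/
open Matrix BigOperators Filter

/-- In-degree of node `i`: sum of absolute values of the `i`-th row of `A`. -/
noncomputable def inDeg {n : ℕ} (A : Matrix (Fin n) (Fin n) ℝ) (i : Fin n) : ℝ := ∑ j, |A i j|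

/-- Laplacian `L = Δ − A` of the signed digraph with adjacency matrix `A`. -/
noncomputable def lapOf {n : ℕ} (A : Matrix (Fin n) (Fin n) ℝ) : Matrix (Fin n) (Fin n) ℝ :=
  Matrix.diagonal (inDeg A) - A

/-- Laplacian `L̄ = Δ − Ā` of the induced unsigned digraph. -/
noncomputable def lapBar {n : ℕ} (A : Matrix (Fin n) (Fin n) ℝ) : Matrix (Fin n) (Fin n) ℝ :=
  Matrix.diagonal (inDeg A) - Matrix.of (fun i j => |A i j|)

/-- `det(L̄_ii)`: determinant of `L̄` with its `i`-th row and column removed. -/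
noncomputable def minorDet {n : ℕ} (A : Matrix (Fin n) (Fin n) ℝ) (i : Fin n) : ℝ :=
  Matrix.det ((lapBar A).submatrix (fun k : {j : Fin n // j ≠ i} => (k : Fin n))
    (fun k : {j : Fin n // j ≠ i} => (k : Fin n)))

/-- `W = diag(det(L̄_11), …, det(L̄_nn))`. -/
noncomputable def Wmat {n : ℕ} (A : Matrix (Fin n) (Fin n) ℝ) : Matrix (Fin n) (Fin n) ℝ :=
  Matrix.diagonal (minorDet A)

/-- Mirror adjacency matrix `Â = (W·A + Aᵀ·W)/2`. -/
noncomputable def mirrorAdj {n : ℕ} (A : Matrix (Fin n) (Fin n) ℝ) : Matrix (Fin n) (Fin n) ℝ :=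
  (1/2 : ℝ) • (Wmat A * A + Aᵀ * Wmat A)

/-- Mirror Laplacian `L̂ = (W·L + Lᵀ·W)/2`. -/
noncomputable def mirrorLap {n : ℕ} (A : Matrix (Fin n) (Fin n) ℝ) : Matrix (Fin n) (Fin n) ℝ :=
  (1/2 : ℝ) • (Wmat A * lapOf A + (lapOf A)ᵀ * Wmat A)

/-- `(j, i)` is a directed edge when `a_ij ≠ 0`; strong connectivity: a directed
path between every ordered pair of distinct nodes. -/
def StronglyConnected {n : ℕ} (A : Matrix (Fin n) (Fin n) ℝ) : Prop :=
  ∀ i j : Fin n, i ≠ j → Relation.TransGen (fun u v => A v u ≠ 0) i j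

/-- `σ` is the diagonal of a gauge transformation: each entry is `±1`. -/
def IsGauge {n : ℕ} (σ : Fin n → ℝ) : Prop := ∀ i, σ i = 1 ∨ σ i = -1

/-- Structural balance: there is a gauge transformation `D = diag σ` with all entries
of `D·A·D` (entrywise `σ i * A i j * σ j`) nonnegative. -/
def StructBalanced {n : ℕ} (A : Matrix (Fin n) (Fin n) ℝ) : Prop :=
  ∃ σ : Fin n → ℝ, IsGauge σ ∧ ∀ i j, 0 ≤ σ i * A i j * σ j

/-- Improved Laplacian potential function
`Φ_e(x) = Σ_i Σ_j det(L̄_ii)·|a_ij|·(x_i − sgn(a_ij)·x_j)²`. -/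
noncomputable def PhiE {n : ℕ} (A : Matrix (Fin n) (Fin n) ℝ) (x : Fin n → ℝ) : ℝ :=
  ∑ i, ∑ j, minorDet A i * |A i j| * (x i - Real.sign (A i j) * x j) ^ 2

open Polynomial

lemma lapBar_apply {n : ℕ} (A : Matrix (Fin n) (Fin n) ℝ) (k l : Fin n) :
    lapBar A k l = (if k = l then inDeg A k else 0) - |A k l| := by
  simp [lapBar, Matrix.sub_apply, Matrix.diagonal_apply, Matrix.of_apply]

lemma sum_lapBar_mul {n : ℕ} (A : Matrix (Fin n) (Fin n) ℝ) (u : Fin n → ℝ) (k : Fin n) :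
    ∑ l, lapBar A k l * u l = inDeg A k * u k - ∑ l, |A k l| * u l := by
  have : ∀ l, lapBar A k l * u l = (if k = l then inDeg A k * u k else 0) - |A k l| * u l := by
    intro l
    rw [lapBar_apply]
    split_ifs with h
    · subst h; ring
    · ring
  rw [Finset.sum_congr rfl (fun l _ => this l), Finset.sum_sub_distrib, Finset.sum_ite_eq]
  simp

lemma prop_closed {n : ℕ} {A : Matrix (Fin n) (Fin n) ℝ} {S : Set (Fin n)}
    (hS : ∀ k l, k ∈ S → A k l ≠ 0 → l ∈ S) :
    ∀ {j k : Fin n}, Relation.TransGen (fun u v => A v u ≠ 0) j k → k ∈ S → j ∈ S := by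
  intro j k h
  induction h with
  | single h => exact fun hk => hS _ _ hk h
  | tail h₁ h₂ ih => exact fun hk => ih (hS _ _ hk h₂)

lemma max_step {n : ℕ} {A : Matrix (Fin n) (Fin n) ℝ} {u : Fin n → ℝ} {k : Fin n}
    (hmax : ∀ l, u l ≤ u k) (heq : inDeg A k * u k ≤ ∑ l, |A k l| * u l) :
    ∀ l, A k l ≠ 0 → u l = u k := by
  have h1 : ∑ l, |A k l| * (u k - u l) ≤ 0 := by
    have : ∑ l, |A k l| * (u k - u l) = inDeg A k * u k - ∑ l, |A k l| * u l := by
      rw [inDeg, Finset.sum_mul, ← Finset.sum_sub_distrib]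
      congr 1; ext l; ring
    linarith
  have h2 : ∀ l ∈ Finset.univ, (0:ℝ) ≤ |A k l| * (u k - u l) := fun l _ =>
    mul_nonneg (abs_nonneg _) (by linarith [hmax l])
  have h3 : ∑ l, |A k l| * (u k - u l) = 0 :=
    le_antisymm h1 (Finset.sum_nonneg h2)
  intro l hl
  have h4 := (Finset.sum_eq_zero_iff_of_nonneg h2).mp h3 l (Finset.mem_univ l)
  have h5 : |A k l| ≠ 0 := fun h => hl (abs_eq_zero.mp h)
  rcases mul_eq_zero.mp h4 with h | h
  · exact absurd h h5
  · linarith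


lemma eval_charpoly_eq {m : Type*} [Fintype m] [DecidableEq m] (M : Matrix m m ℝ) (t : ℝ) :
    ((-M).charpoly).eval t = (M + t • (1 : Matrix m m ℝ)).det := by
  rw [Matrix.charpoly]
  have h : Polynomial.eval t (-M).charmatrix.det
      = ((-M).charmatrix.map (Polynomial.evalRingHom t)).det :=
    RingHom.map_det (Polynomial.evalRingHom t) _
  rw [h]
  congr 1
  ext k l
  simp only [Matrix.map_apply, Matrix.charmatrix_apply, Polynomial.coe_evalRingHom,
    Matrix.sub_apply, Matrix.diagonal_apply, Matrix.neg_apply, Matrix.add_apply,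
    Matrix.smul_apply, Matrix.one_apply, Polynomial.eval_sub, Polynomial.eval_C, smul_eq_mul]
  split_ifs with hkl
  · simp [Polynomial.eval_X]; ring
  · simp [Polynomial.eval_X]

section Pos
variable {n : ℕ} {A : Matrix (Fin n) (Fin n) ℝ}

/-- Kernel of the shifted principal minor is trivial. -/
lemma shifted_ker (hn : 2 ≤ n) (hsc : StronglyConnected A) (i : Fin n)
    {t : ℝ} (ht : 0 ≤ t) (v : {j : Fin n // j ≠ i} → ℝ)
    (hv : ((lapBar A).submatrix (fun k : {j : Fin n // j ≠ i} => (k : Fin n))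
      (fun k : {j : Fin n // j ≠ i} => (k : Fin n)) + t • 1) *ᵥ v = 0) : v = 0 := by
  set u : Fin n → ℝ := fun k => if h : k = i then 0 else v ⟨k, h⟩ with hu
  have hui : u i = 0 := by simp [hu]
  have huv : ∀ l : {j : Fin n // j ≠ i}, u (l : Fin n) = v l := by
    intro l; simp [hu, l.prop]
  -- the key equation for k ≠ i
  have key : ∀ (k : Fin n) (hki : k ≠ i),
      inDeg A k * u k + t * u k = ∑ l, |A k l| * u l := by
    intro k hki
    have h0 := congrFun hv ⟨k, hki⟩
    rw [Matrix.mulVec, dotProduct] at h0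
    simp only [Matrix.add_apply, Matrix.submatrix_apply, Matrix.smul_apply, Matrix.one_apply,
      Pi.zero_apply] at h0
    have hterm : ∀ l : {j : Fin n // j ≠ i},
        (lapBar A k (l : Fin n) + t * (if (⟨k, hki⟩ : {j : Fin n // j ≠ i}) = l then 1 else 0)) * v l
        = lapBar A k (l : Fin n) * v l
          + (if (⟨k, hki⟩ : {j : Fin n // j ≠ i}) = l then t * v l else 0) := by
      intro l; split_ifs <;> ring
    simp only [smul_eq_mul] at h0
    rw [Finset.sum_congr rfl (fun l _ => hterm l), Finset.sum_add_distrib,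
      Finset.sum_ite_eq] at h0
    simp only [Finset.mem_univ, if_true] at h0
    have hs : ∑ l : {j : Fin n // j ≠ i}, lapBar A k (l : Fin n) * v l
        = ∑ l : Fin n, lapBar A k l * u l := by
      rw [Finset.sum_congr rfl (fun l _ => by rw [← huv l])]
      have h1 : ∑ l ∈ Finset.univ.erase i, lapBar A k l * u l
          = ∑ l : {j : Fin n // j ≠ i}, lapBar A k (l : Fin n) * u (l : Fin n) :=
        Finset.sum_subtype _ (by simp [Finset.mem_erase]) _
      rw [← h1, Finset.sum_erase _ (by rw [hui, mul_zero])]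
    rw [hs, sum_lapBar_mul] at h0
    have huk : u k = v ⟨k, hki⟩ := huv ⟨k, hki⟩
    rw [← huk] at h0
    linarith
  -- now the maximum principle: u ≤ 0 everywhere
  have hnonpos : ∀ (w : Fin n → ℝ), w i = 0 →
      (∀ (k : Fin n) (hki : k ≠ i), inDeg A k * w k + t * w k = ∑ l, |A k l| * w l) →
      ∀ k, w k ≤ 0 := by
    intro w hwi hkey k
    by_contra hpos
    push_neg at hpos
    obtain ⟨k₀, -, hk₀⟩ := Finset.exists_max_image Finset.univ w ⟨i, Finset.mem_univ i⟩
    have hk₀' : ∀ l, w l ≤ w k₀ := fun l => hk₀ l (Finset.mem_univ l)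
    have hk₀pos : 0 < w k₀ := lt_of_lt_of_le hpos (hk₀' k)
    set S : Set (Fin n) := {m | w m = w k₀} with hS
    have hik₀ : i ≠ k₀ := fun h => by rw [← h, hwi] at hk₀pos; exact lt_irrefl 0 hk₀pos
    have hclosed : ∀ p q, p ∈ S → A p q ≠ 0 → q ∈ S := by
      intro p q hp hA
      have hpi : p ≠ i := fun h => by
        have : w p = 0 := h ▸ hwi
        rw [hp] at this; rw [this] at hk₀pos; exact lt_irrefl 0 hk₀pos
      have heq := hkey p hpi
      have hwp : 0 < w p := hp ▸ hk₀pos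
      have hle : inDeg A p * w p ≤ ∑ l, |A p l| * w l := by nlinarith [mul_nonneg ht hwp.le]
      have hmx : ∀ l, w l ≤ w p := fun l => hp ▸ hk₀' l
      have := max_step hmx hle q hA
      show w q = w k₀
      rw [this, hp]
    have : i ∈ S := prop_closed hclosed (hsc i k₀ hik₀) rfl
    rw [Set.mem_setOf_eq, hwi] at this
    rw [← this] at hk₀pos
    exact lt_irrefl 0 hk₀pos
  have h1 : ∀ k, u k ≤ 0 := hnonpos u hui key
  have h2 : ∀ k, (-u) k ≤ 0 := by
    refine hnonpos (-u) (by simp [hui]) ?_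
    intro k hki
    have := key k hki
    simp only [Pi.neg_apply]
    have hsum : ∑ x : Fin n, |A k x| * -u x = -∑ l, |A k l| * u l := by
      rw [← Finset.sum_neg_distrib]; exact Finset.sum_congr rfl fun l _ => by ring
    rw [hsum]
    linarith
  ext l
  have ha := h1 (l : Fin n)
  have hb := h2 (l : Fin n)
  simp only [Pi.neg_apply] at hb
  have : u (l : Fin n) = 0 := le_antisymm ha (by linarith)
  rw [← huv l, this]; rfl


lemma minorDet_pos (hn : 2 ≤ n) (hsc : StronglyConnected A) (i : Fin n) :
    0 < minorDet A i := by
  set Msub := (lapBar A).submatrix (fun k : {j : Fin n // j ≠ i} => (k : Fin n))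
    (fun k : {j : Fin n // j ≠ i} => (k : Fin n)) with hMsub
  have hdetne : ∀ t : ℝ, 0 ≤ t → (Msub + t • 1).det ≠ 0 := by
    intro t ht hdet
    obtain ⟨v, hv0, hveq⟩ := (Matrix.exists_mulVec_eq_zero_iff).mpr hdet
    exact hv0 (shifted_ker hn hsc i ht v hveq)
  set p := (-Msub).charpoly with hp
  have heval : ∀ t : ℝ, p.eval t = (Msub + t • 1).det := fun t => eval_charpoly_eq Msub t
  have hcard : 0 < Fintype.card {j : Fin n // j ≠ i} := by
    have h1 : Fintype.card {j : Fin n // ¬ j = i}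
        = Fintype.card (Fin n) - Fintype.card {j : Fin n // j = i} :=
      Fintype.card_subtype_compl _
    have h2 : Fintype.card {j : Fin n // j = i} = 1 := Fintype.card_subtype_eq i
    simp only [Fintype.card_fin] at h1
    show 0 < Fintype.card {j : Fin n // ¬ j = i}
    omega
  have hndeg : 0 < p.natDegree := by
    rw [hp, Matrix.charpoly_natDegree_eq_dim]; exact hcard
  have hdeg : 0 < p.degree := Polynomial.natDegree_pos_iff_degree_pos.mp hndeg
  have hmonic : p.Monic := Matrix.charpoly_monic _
  have htend := Polynomial.tendsto_atTop_of_leadingCoeff_nonneg p hdeg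
    (by rw [hmonic.leadingCoeff]; norm_num)
  obtain ⟨t₀, hpt₀, ht₀⟩ := ((htend.eventually_gt_atTop 0).and (eventually_ge_atTop 0)).exists
  have hd0 : Msub.det ≠ 0 := by
    have := hdetne 0 le_rfl
    simpa using this
  have heval0 : p.eval 0 = Msub.det := by rw [heval]; simp
  by_contra hle
  push_neg at hle
  have hMd : minorDet A i = Msub.det := rfl
  have hlt : p.eval 0 < 0 := by
    rw [heval0]
    rw [hMd] at hle
    exact lt_of_le_of_ne hle hd0
  have hmem : (0:ℝ) ∈ Set.Icc (p.eval 0) (p.eval t₀) := ⟨hlt.le, hpt₀.le⟩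
  obtain ⟨c, hc, hcval⟩ := intermediate_value_Icc ht₀ p.continuous.continuousOn hmem
  exact hdetne c hc.1 (by rw [← heval]; exact hcval)

end Pos


lemma adj_diag {n : ℕ} (M : Matrix (Fin n) (Fin n) ℝ) (i : Fin n) :
    Matrix.adjugate M i i = Matrix.det (M.submatrix
      (fun k : {j : Fin n // j ≠ i} => (k : Fin n)) (fun k : {j : Fin n // j ≠ i} => (k : Fin n))) := by
  rw [Matrix.adjugate_apply]
  haveI : Unique {j : Fin n // j = i} := ⟨⟨⟨i, rfl⟩⟩, fun j => Subtype.ext j.prop⟩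
  set e : {j : Fin n // j = i} ⊕ {j : Fin n // ¬ j = i} ≃ Fin n := Equiv.sumCompl (fun j => j = i)
  rw [← Matrix.det_submatrix_equiv_self e]
  have hblock : ((M.updateRow i (Pi.single i 1)).submatrix e e) =
      Matrix.fromBlocks (1 : Matrix {j : Fin n // j = i} {j : Fin n // j = i} ℝ)
        (0 : Matrix {j : Fin n // j = i} {j : Fin n // ¬ j = i} ℝ)
        (Matrix.of fun (k : {j : Fin n // ¬ j = i}) (_ : {j : Fin n // j = i}) => M (k : Fin n) i)
        (Matrix.of fun (k l : {j : Fin n // ¬ j = i}) => M (k : Fin n) (l : Fin n)) := by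
    ext p q
    rcases p with p | p <;> rcases q with q | q <;>
      simp only [e, Matrix.submatrix_apply, Equiv.sumCompl_apply_inl, Equiv.sumCompl_apply_inr,
        Matrix.fromBlocks_apply₁₁, Matrix.fromBlocks_apply₁₂, Matrix.fromBlocks_apply₂₁,
        Matrix.fromBlocks_apply₂₂, Matrix.of_apply]
    · have hp : (p : Fin n) = i := p.prop
      have hq : (q : Fin n) = i := q.prop
      rw [hp, Matrix.updateRow_self]
      rw [hq, Pi.single_eq_same]
      have : p = q := Subtype.ext (hp.trans hq.symm)
      rw [this, Matrix.one_apply_eq]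
    · have hp : (p : Fin n) = i := p.prop
      rw [hp, Matrix.updateRow_self]
      rw [Pi.single_eq_of_ne q.prop]; rfl
    · have hq : (q : Fin n) = i := q.prop
      rw [Matrix.updateRow_ne p.prop, hq]
    · rw [Matrix.updateRow_ne p.prop]
  rw [hblock, Matrix.det_fromBlocks_zero₁₂, Matrix.det_one, one_mul]
  rfl

-- continuing: wnull, quadratic identity, main theorem (to be appended to assembled file)
section Main
variable {n : ℕ} {A : Matrix (Fin n) (Fin n) ℝ}

lemma ker_const (hn : 2 ≤ n) (hsc : StronglyConnected A)
    {u : Fin n → ℝ} (hu : lapBar A *ᵥ u = 0) : ∀ j k, u j = u k := by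
  have hne : (Finset.univ : Finset (Fin n)).Nonempty := ⟨⟨0, by omega⟩, Finset.mem_univ _⟩
  obtain ⟨k₀, -, hk₀⟩ := Finset.exists_max_image Finset.univ u hne
  have hk₀' : ∀ l, u l ≤ u k₀ := fun l => hk₀ l (Finset.mem_univ l)
  set S : Set (Fin n) := {k | u k = u k₀} with hSdef
  have hS : ∀ k l, k ∈ S → A k l ≠ 0 → l ∈ S := by
    intro k l hk hA
    have heqk : inDeg A k * u k = ∑ l, |A k l| * u l := by
      have h0 := congrFun hu k
      rw [Matrix.mulVec, dotProduct] at h0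
      rw [sum_lapBar_mul] at h0
      simp at h0
      linarith [h0]
    have hmax : ∀ l, u l ≤ u k := fun l => hk.symm ▸ hk₀' l
    have := max_step hmax (le_of_eq heqk) l hA
    show u l = u k₀
    rw [this, hk]
  have hall : ∀ j, u j = u k₀ := by
    intro j
    by_cases h : j = k₀
    · rw [h]
    · exact prop_closed hS (hsc j k₀ h) rfl
  intro j k; rw [hall j, hall k]

lemma det_lapBar_zero (hn : 2 ≤ n) : (lapBar A).det = 0 := by
  have h1 : lapBar A *ᵥ (fun _ => (1:ℝ)) = 0 := by
    ext k
    rw [Matrix.mulVec, dotProduct]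
    have : ∑ l, lapBar A k l * (fun _ => (1:ℝ)) l = ∑ l, lapBar A k l * 1 := rfl
    rw [this, sum_lapBar_mul]
    simp [inDeg]
  rw [← Matrix.exists_mulVec_eq_zero_iff]
  refine ⟨fun _ => 1, ?_, h1⟩
  intro h
  have := congrFun h ⟨0, by omega⟩
  simp at this

lemma adj_const (hn : 2 ≤ n) (hsc : StronglyConnected A) :
    ∀ k j, (lapBar A).adjugate k j = (lapBar A).adjugate j j := by
  intro k j
  have hker : lapBar A *ᵥ (fun m => (lapBar A).adjugate m j) = 0 := by
    ext m
    have h := congrFun (congrFun (Matrix.mul_adjugate (lapBar A)) m) j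
    rw [det_lapBar_zero hn] at h
    simp only [Matrix.smul_apply, Matrix.one_apply, zero_smul, smul_eq_mul, zero_mul] at h
    rw [Matrix.mulVec, dotProduct]
    rw [Matrix.mul_apply] at h
    simpa using h
  exact ker_const hn hsc hker k j

lemma wnull (hn : 2 ≤ n) (hsc : StronglyConnected A) (j : Fin n) :
    ∑ k, minorDet A k * lapBar A k j = 0 := by
  have h := congrFun (congrFun (Matrix.adjugate_mul (lapBar A)) j) j
  rw [det_lapBar_zero hn] at h
  simp only [Matrix.smul_apply, Matrix.one_apply, zero_smul, smul_eq_mul, zero_mul] at h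
  rw [Matrix.mul_apply] at h
  rw [← h]
  refine Finset.sum_congr rfl fun k _ => ?_
  rw [adj_const hn hsc j k, adj_diag]
  rfl

lemma col_identity (hn : 2 ≤ n) (hsc : StronglyConnected A) (j : Fin n) :
    ∑ k, minorDet A k * |A k j| = minorDet A j * inDeg A j := by
  have h := wnull (A := A) hn hsc j
  have hterm : ∀ k, minorDet A k * lapBar A k j
      = (if k = j then minorDet A k * inDeg A k else 0) - minorDet A k * |A k j| := by
    intro k
    rw [lapBar_apply]
    split_ifs with hkj
    · ring
    · ring
  rw [Finset.sum_congr rfl (fun k _ => hterm k), Finset.sum_sub_distrib,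
    Finset.sum_ite_eq' Finset.univ j] at h
  simp only [Finset.mem_univ, if_true] at h
  linarith

end Main
section Quad
variable {n : ℕ} {A : Matrix (Fin n) (Fin n) ℝ}

lemma real_sign_cases (a : ℝ) (h : a ≠ 0) : Real.sign a = 1 ∨ Real.sign a = -1 := by
  rcases lt_trichotomy a 0 with h1 | h1 | h1
  · exact Or.inr (Real.sign_of_neg h1)
  · exact absurd h1 h
  · exact Or.inl (Real.sign_of_pos h1)

lemma real_sign_mul_abs (a : ℝ) : Real.sign a * |a| = a := by
  rcases lt_trichotomy a 0 with h1 | h1 | h1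
  · rw [Real.sign_of_neg h1, abs_of_neg h1]; ring
  · simp [h1]
  · rw [Real.sign_of_pos h1, abs_of_pos h1]; ring

lemma hBij (A : Matrix (Fin n) (Fin n) ℝ) (i j : Fin n) :
    (Wmat A * lapOf A) i j = minorDet A i * ((if i = j then inDeg A i else 0) - A i j) := by
  rw [Wmat, Matrix.diagonal_mul]
  show minorDet A i * (Matrix.diagonal (inDeg A) - A) i j = _
  simp [Matrix.sub_apply, Matrix.diagonal_apply]

lemma quad_base (x : Fin n → ℝ) :
    x ⬝ᵥ ((Wmat A * lapOf A) *ᵥ x)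
      = (∑ i, minorDet A i * inDeg A i * x i ^ 2)
        - ∑ i, ∑ j, minorDet A i * A i j * x i * x j := by
  rw [dotProduct]
  have h1 : ∀ i, x i * ((Wmat A * lapOf A) *ᵥ x) i
      = (minorDet A i * inDeg A i * x i ^ 2) - ∑ j, minorDet A i * A i j * x i * x j := by
    intro i
    rw [Matrix.mulVec, dotProduct, Finset.mul_sum]
    have h2 : ∀ j, x i * ((Wmat A * lapOf A) i j * x j)
        = (if i = j then minorDet A i * inDeg A i * x i * x j else 0)
          - minorDet A i * A i j * x i * x j := by
      intro j; rw [hBij]; split_ifs with h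
      · ring
      · ring
    rw [Finset.sum_congr rfl fun j _ => h2 j, Finset.sum_sub_distrib,
      Finset.sum_ite_eq Finset.univ i]
    simp only [Finset.mem_univ, if_true]
    congr 1
    ring
  rw [Finset.sum_congr rfl fun i _ => h1 i, Finset.sum_sub_distrib]

lemma phi_eq (hn : 2 ≤ n) (hsc : StronglyConnected A) (x : Fin n → ℝ) :
    PhiE A x = 2 * (x ⬝ᵥ ((Wmat A * lapOf A) *ᵥ x)) := by
  rw [quad_base, PhiE]
  have hterm : ∀ i j, minorDet A i * |A i j| * (x i - Real.sign (A i j) * x j) ^ 2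
      = minorDet A i * |A i j| * x i ^ 2 - 2 * (minorDet A i * A i j * x i * x j)
        + minorDet A i * |A i j| * x j ^ 2 := by
    intro i j
    rcases eq_or_ne (A i j) 0 with h | h
    · simp [h]
    · have hs : Real.sign (A i j) * |A i j| = A i j := real_sign_mul_abs _
      have hs2 : Real.sign (A i j) * Real.sign (A i j) = 1 := by
        rcases real_sign_cases (A i j) h with h2 | h2 <;> rw [h2] <;> norm_num
      calc minorDet A i * |A i j| * (x i - Real.sign (A i j) * x j) ^ 2
          = minorDet A i * |A i j| * x i ^ 2
            - 2 * (minorDet A i * (Real.sign (A i j) * |A i j|) * x i * x j)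
            + minorDet A i * ((Real.sign (A i j) * Real.sign (A i j)) * |A i j|) * x j ^ 2 := by
            ring
        _ = _ := by rw [hs, hs2, one_mul]
  have hsplit : ∑ i, ∑ j, minorDet A i * |A i j| * (x i - Real.sign (A i j) * x j) ^ 2
      = (∑ i, ∑ j, minorDet A i * |A i j| * x i ^ 2)
        - 2 * (∑ i, ∑ j, minorDet A i * A i j * x i * x j)
        + ∑ i, ∑ j, minorDet A i * |A i j| * x j ^ 2 := by
    rw [Finset.mul_sum]
    rw [← Finset.sum_sub_distrib, ← Finset.sum_add_distrib]
    refine Finset.sum_congr rfl fun i _ => ?_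
    rw [Finset.mul_sum, ← Finset.sum_sub_distrib, ← Finset.sum_add_distrib]
    exact Finset.sum_congr rfl fun j _ => hterm i j
  rw [hsplit]
  have hA1 : ∑ i, ∑ j, minorDet A i * |A i j| * x i ^ 2
      = ∑ i, minorDet A i * inDeg A i * x i ^ 2 := by
    refine Finset.sum_congr rfl fun i _ => ?_
    calc ∑ j, minorDet A i * |A i j| * x i ^ 2
        = (∑ j, |A i j|) * (minorDet A i * x i ^ 2) := by
          rw [Finset.sum_mul]; exact Finset.sum_congr rfl fun j _ => by ring
      _ = minorDet A i * inDeg A i * x i ^ 2 := by rw [← inDeg]; ring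
  have hA3 : ∑ i, ∑ j, minorDet A i * |A i j| * x j ^ 2
      = ∑ i, minorDet A i * inDeg A i * x i ^ 2 := by
    rw [Finset.sum_comm]
    refine Finset.sum_congr rfl fun j _ => ?_
    have : ∑ i, minorDet A i * |A i j| * x j ^ 2
        = (∑ i, minorDet A i * |A i j|) * x j ^ 2 := by
      rw [Finset.sum_mul]
    rw [this, col_identity hn hsc j]
  rw [hA1, hA3]
  ring

lemma quad_eq (hn : 2 ≤ n) (hsc : StronglyConnected A) (x : Fin n → ℝ) :
    x ⬝ᵥ (mirrorLap A *ᵥ x) = PhiE A x / 2 := by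
  have hBt : (lapOf A)ᵀ * Wmat A = (Wmat A * lapOf A)ᵀ := by
    rw [Matrix.transpose_mul]
    congr 1
    rw [Wmat, Matrix.diagonal_transpose]
  have hdott : x ⬝ᵥ ((Wmat A * lapOf A)ᵀ *ᵥ x) = x ⬝ᵥ ((Wmat A * lapOf A) *ᵥ x) := by
    rw [Matrix.mulVec_transpose, dotProduct_comm, ← Matrix.dotProduct_mulVec]
  rw [mirrorLap, hBt, Matrix.smul_mulVec, Matrix.add_mulVec, dotProduct_smul,
    dotProduct_add, hdott, phi_eq hn hsc]
  simp
  ring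
end Quad
lemma real_sign_neg' (a : ℝ) : Real.sign (-a) = -Real.sign a := by
  rcases lt_trichotomy a 0 with h1 | h1 | h1
  · rw [Real.sign_of_neg h1, Real.sign_of_pos (by linarith : 0 < -a)]; ring
  · simp [h1]
  · rw [Real.sign_of_pos h1, Real.sign_of_neg (by linarith : -a < 0)]

lemma real_sign_mul_self (a : ℝ) : Real.sign a * a = |a| := by
  rcases lt_trichotomy a 0 with h1 | h1 | h1
  · rw [Real.sign_of_neg h1, abs_of_neg h1]; ring
  · simp [h1]
  · rw [Real.sign_of_pos h1, abs_of_pos h1]; ring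

/-- `G` is structurally unbalanced iff `L̂` is positive definite. -/
theorem unbalanced_iff_posdef (n : ℕ) (hn : 2 ≤ n)
    (A : Matrix (Fin n) (Fin n) ℝ)
    (hdiag : ∀ i, A i i = 0) (hdigon : ∀ i j, 0 ≤ A i j * A j i)
    (hsc : StronglyConnected A) :
    ¬ StructBalanced A ↔ (mirrorLap A).PosDef := by
  have hwpos : ∀ i, 0 < minorDet A i := minorDet_pos hn hsc
  have hquad := quad_eq hn hsc (A := A)
  have hstar : ∀ x : Fin n → ℝ, star x = x := fun x => funext fun i => by simp
  have hsymm : (mirrorLap A)ᵀ = mirrorLap A := by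
    rw [mirrorLap, Matrix.transpose_smul, Matrix.transpose_add, Matrix.transpose_mul,
      Matrix.transpose_mul, Matrix.transpose_transpose,
      show (Wmat A)ᵀ = Wmat A from by rw [Wmat, Matrix.diagonal_transpose], add_comm]
  have hherm : (mirrorLap A).IsHermitian := by
    show (mirrorLap A)ᴴ = mirrorLap A
    have h : (mirrorLap A)ᴴ = (mirrorLap A)ᵀ := by
      ext i j; simp [Matrix.conjTranspose_apply]
    rw [h, hsymm]
  have htermnn : ∀ (x : Fin n → ℝ) (i j : Fin n),
      0 ≤ minorDet A i * |A i j| * (x i - Real.sign (A i j) * x j) ^ 2 := fun x i j =>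
    mul_nonneg (mul_nonneg (hwpos i).le (abs_nonneg _)) (sq_nonneg _)
  constructor
  · intro hnb
    refine Matrix.PosDef.of_dotProduct_mulVec_pos hherm (fun x hx => ?_)
    rw [hstar x, hquad x]
    have hge : 0 ≤ PhiE A x :=
      Finset.sum_nonneg fun i _ => Finset.sum_nonneg fun j _ => htermnn x i j
    have hne : PhiE A x ≠ 0 := by
      intro h0
      apply hnb
      have hzero : ∀ i j, minorDet A i * |A i j| * (x i - Real.sign (A i j) * x j) ^ 2 = 0 := by
        intro i j
        have houter := (Finset.sum_eq_zero_iff_of_nonneg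
          (fun i _ => Finset.sum_nonneg fun j _ => htermnn x i j)).mp h0 i (Finset.mem_univ i)
        exact (Finset.sum_eq_zero_iff_of_nonneg (fun j _ => htermnn x i j)).mp houter j
          (Finset.mem_univ j)
      have hedge : ∀ i j, A i j ≠ 0 → x i = Real.sign (A i j) * x j := by
        intro i j hA
        have h1 := hzero i j
        have h2 : minorDet A i * |A i j| ≠ 0 :=
          ne_of_gt (mul_pos (hwpos i) (abs_pos.mpr hA))
        rcases mul_eq_zero.mp h1 with h3 | h3
        · exact absurd h3 h2
        · have := pow_eq_zero_iff (n := 2) (by norm_num) |>.mp h3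
          linarith [this]
      obtain ⟨k₀, hk₀⟩ := Function.ne_iff.mp hx
      simp only [Pi.zero_apply] at hk₀
      have habs : ∀ i j, A i j ≠ 0 → |x i| = |x j| := by
        intro i j hA
        rw [hedge i j hA, abs_mul]
        rcases real_sign_cases _ hA with h | h <;> rw [h] <;> simp
      set S : Set (Fin n) := {k | |x k| = |x k₀|} with hSdef
      have hS : ∀ k l, k ∈ S → A k l ≠ 0 → l ∈ S := by
        intro k l hk hA
        show |x l| = |x k₀|
        rw [← habs k l hA]; exact hk
      have hallS : ∀ j, |x j| = |x k₀| := by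
        intro j
        by_cases h : j = k₀
        · rw [h]
        · exact prop_closed hS (hsc j k₀ h) rfl
      have hxne : ∀ j, x j ≠ 0 := by
        intro j h
        have := hallS j
        rw [h, abs_zero] at this
        exact hk₀ (abs_eq_zero.mp this.symm)
      refine ⟨fun k => Real.sign (x k), fun k => real_sign_cases _ (hxne k), ?_⟩
      intro i j
      rcases eq_or_ne (A i j) 0 with h | h
      · rw [h]; simp
      · have hx' := hedge i j h
        have hsx : Real.sign (x i) = Real.sign (A i j) * Real.sign (x j) := by
          rw [hx']
          rcases real_sign_cases _ h with hs | hs <;> rw [hs]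
          · simp
          · rw [neg_one_mul, real_sign_neg']; ring
        have hσj : Real.sign (x j) * Real.sign (x j) = 1 := by
          rcases real_sign_cases _ (hxne j) with h1 | h1 <;> rw [h1] <;> norm_num
        have hfin : Real.sign (x i) * A i j * Real.sign (x j) = |A i j| := by
          rw [hsx]
          calc Real.sign (A i j) * Real.sign (x j) * A i j * Real.sign (x j)
              = (Real.sign (A i j) * A i j) * (Real.sign (x j) * Real.sign (x j)) := by ring
            _ = |A i j| := by rw [hσj, real_sign_mul_self, mul_one]
        rw [hfin]
        exact abs_nonneg _
    have hgt : 0 < PhiE A x := lt_of_le_of_ne hge (Ne.symm hne)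
    linarith
  · intro hpd hbal
    obtain ⟨σ, hg, hb⟩ := hbal
    have hσne : σ ≠ 0 := by
      intro h
      have := hg ⟨0, by omega⟩
      rw [h] at this
      simp at this
    have hphi : PhiE A σ = 0 := by
      rw [PhiE]
      refine Finset.sum_eq_zero fun i _ => Finset.sum_eq_zero fun j _ => ?_
      rcases eq_or_ne (A i j) 0 with h | h
      · simp [h]
      · have hsub : σ i - Real.sign (A i j) * σ j = 0 := by
          have hbb := hb i j
          rcases lt_trichotomy (A i j) 0 with hA | hA | hA
          · rw [Real.sign_of_neg hA]
            rcases hg i with hi | hi <;> rcases hg j with hj | hj <;>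
              rw [hi, hj] <;> rw [hi, hj] at hbb
            · exfalso; nlinarith
            · norm_num
            · norm_num
            · exfalso; nlinarith
          · exact absurd hA h
          · rw [Real.sign_of_pos hA]
            rcases hg i with hi | hi <;> rcases hg j with hj | hj <;>
              rw [hi, hj] <;> rw [hi, hj] at hbb
            · norm_num
            · exfalso; nlinarith
            · exfalso; nlinarith
            · norm_num
        rw [hsub]
        ring
    have hlt := hpd.dotProduct_mulVec_pos hσne
    rw [hstar σ, hquad σ, hphi] at hlt
    norm_num at hlt
end

section
/- Let G be any signed digraph. Then for every x ∈ ℝⁿ, the improved Laplacian potential function satisfies Φ_e(x) = xᵀ(W·L + Lᵀ·W)x; that is, Σ_{i=1}^n Σ_{j=1}^n det(L̄_ii)·|a_ij|·(x_i − sgn(a_ij)·x_j)² = xᵀ(W·L + Lᵀ·W)x. -/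
open Matrix BigOperators Filter

lemma det_zero_of_rowSums {n : ℕ} (hn : 0 < n) (M : Matrix (Fin n) (Fin n) ℝ)
    (h : ∀ i, ∑ j, M i j = 0) : M.det = 0 := by
  rw [← Matrix.exists_mulVec_eq_zero_iff]
  refine ⟨fun _ => 1, ?_, ?_⟩
  · intro hc
    have := congrFun hc ⟨0, hn⟩
    simp at this
  · funext i
    simpa [Matrix.mulVec, dotProduct] using h i

lemma cof_row_const {n : ℕ} (M : Matrix (Fin n) (Fin n) ℝ)
    (h : ∀ i, ∑ j, M i j = 0) (i j k : Fin n) :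
    (M.updateRow i (Pi.single j 1)).det = (M.updateRow i (Pi.single k 1)).det := by
  have hsub : (M.updateRow i (Pi.single j (1:ℝ) - Pi.single k 1)).det = 0 := by
    apply det_zero_of_rowSums i.pos
    intro l
    by_cases hl : l = i
    · subst hl
      simp [Matrix.updateRow_self, Finset.sum_sub_distrib]
    · simp [Matrix.updateRow_ne hl, h l]
  have hadd := Matrix.det_updateRow_add M i (Pi.single j (1:ℝ) - Pi.single k 1) (Pi.single k 1)
  rw [sub_add_cancel] at hadd
  rw [hadd, hsub, zero_add]

/-- the equivalence deleting index `i`. -/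
def delEquiv {n : ℕ} (i : Fin n) : ({j : Fin n // j ≠ i} ⊕ Unit) ≃ Fin n where
  toFun := Sum.elim Subtype.val fun _ => i
  invFun k := if h : k = i then Sum.inr () else Sum.inl ⟨k, h⟩
  left_inv := by
    rintro (⟨k, hk⟩ | ⟨⟩)
    · simp [hk]
    · simp
  right_inv k := by by_cases h : k = i <;> simp [h]

lemma det_minor_eq_det_updateRow {n : ℕ} (M : Matrix (Fin n) (Fin n) ℝ) (i : Fin n) :
    (M.submatrix (fun k : {j : Fin n // j ≠ i} => (k : Fin n))
      (fun k : {j : Fin n // j ≠ i} => (k : Fin n))).det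
      = (M.updateRow i (Pi.single i 1)).det := by
  set N := M.updateRow i (Pi.single i (1:ℝ)) with hN
  set N' := N.updateCol i (Pi.single i (1:ℝ)) with hN'
  have step1 : N.det = N'.det := by
    have heq : N = N.updateCol i (fun k => N k i) := (Matrix.updateCol_eq_self N i).symm
    have hdecomp : (fun k => N k i) = Pi.single i (1:ℝ) + (fun k => N k i - (Pi.single i (1:ℝ) : Fin n → ℝ) k) := by
      funext k; simp
    rw [heq, hdecomp, Matrix.det_updateCol_add]
    have hzero : (N.updateCol i (fun k => N k i - (Pi.single i (1:ℝ) : Fin n → ℝ) k)).det = 0 := by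
      apply Matrix.det_eq_zero_of_row_eq_zero i
      intro l
      by_cases hl : l = i
      · subst hl; simp [Matrix.updateCol_self, hN, Matrix.updateRow_self]
      · simp [Matrix.updateCol_ne hl, hN, Matrix.updateRow_self, Pi.single_apply,
          Ne.symm hl]
    rw [hzero, add_zero]
  have step2 : N'.submatrix (delEquiv i) (delEquiv i) = Matrix.fromBlocks
      (M.submatrix (fun k : {j : Fin n // j ≠ i} => (k : Fin n))
        (fun k : {j : Fin n // j ≠ i} => (k : Fin n))) 0 0 1 := by
    ext a b
    rcases a with (⟨k, hk⟩ | ⟨⟩) <;> rcases b with (⟨l, hl⟩ | ⟨⟩)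
    · simp [delEquiv, hN', hN, Matrix.updateCol_ne hl, Matrix.updateRow_ne hk]
    · simp [delEquiv, hN', hN, Matrix.updateCol_self, Pi.single_apply, hk]
    · simp [delEquiv, hN', hN, Matrix.updateCol_ne hl, Matrix.updateRow_self,
        Pi.single_apply, Ne.symm hl]
    · simp [delEquiv, hN', hN, Matrix.updateCol_self, Pi.single_apply, Matrix.one_apply]
  rw [step1, ← Matrix.det_submatrix_equiv_self (delEquiv i) N', step2,
    Matrix.det_fromBlocks_zero₂₁]
  simp

lemma key_identity {n : ℕ} (hn : 0 < n) (M : Matrix (Fin n) (Fin n) ℝ)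
    (h : ∀ i, ∑ j, M i j = 0) (j : Fin n) :
    ∑ i, (M.updateRow i (Pi.single i 1)).det * M i j = 0 := by
  have h1 : ∀ i, (M.updateRow i (Pi.single i (1:ℝ))).det = M.adjugate j i := by
    intro i
    rw [Matrix.adjugate_apply]
    exact cof_row_const M h i i j
  calc ∑ i, (M.updateRow i (Pi.single i (1:ℝ))).det * M i j
      = ∑ i, M.adjugate j i * M i j := by
        exact Finset.sum_congr rfl fun i _ => by rw [h1 i]
    _ = (M.adjugate * M) j j := (Matrix.mul_apply).symm
    _ = 0 := by
        rw [Matrix.adjugate_mul, det_zero_of_rowSums hn M h]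
        simp

lemma expand_term (w a xi xj : ℝ) :
    w * |a| * (xi - Real.sign a * xj) ^ 2
      = w * |a| * xi ^ 2 + w * |a| * xj ^ 2 - 2 * (w * a * (xi * xj)) := by
  rcases lt_trichotomy a 0 with h | h | h
  · rw [Real.sign_of_neg h, abs_of_neg h]; ring
  · simp [h]
  · rw [Real.sign_of_pos h, abs_of_pos h]; ring

lemma lapBar_rowSum {n : ℕ} (A : Matrix (Fin n) (Fin n) ℝ) (i : Fin n) :
    ∑ j, lapBar A i j = 0 := by
  simp [lapBar, Matrix.sub_apply, Finset.sum_sub_distrib, Matrix.diagonal_apply, inDeg]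

/-- `Φ_e(x) = xᵀ(W·L + Lᵀ·W)x` for every `x ∈ ℝⁿ`. -/
theorem phiE_eq_quadratic_form (n : ℕ) (hn : 2 ≤ n)
    (A : Matrix (Fin n) (Fin n) ℝ)
    (hdiag : ∀ i, A i i = 0) (hdigon : ∀ i j, 0 ≤ A i j * A j i) :
    ∀ x : Fin n → ℝ,
      PhiE A x = x ⬝ᵥ ((Wmat A * lapOf A + (lapOf A)ᵀ * Wmat A) *ᵥ x) := by
  intro x
  have hn0 : 0 < n := by omega
  set w := minorDet A with hwdef
  have hw : ∀ i, w i = ((lapBar A).updateRow i (Pi.single i 1)).det := by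
    intro i
    rw [hwdef]
    exact (det_minor_eq_det_updateRow (lapBar A) i).symm ▸ rfl
  have hkey : ∀ j, ∑ i, w i * |A i j| = w j * inDeg A j := by
    intro j
    have h0 := key_identity hn0 (lapBar A) (lapBar_rowSum A) j
    have h0' : ∑ i, w i * lapBar A i j = 0 := by
      rw [show (∑ i, w i * lapBar A i j)
          = ∑ i, ((lapBar A).updateRow i (Pi.single i 1)).det * lapBar A i j from
        Finset.sum_congr rfl fun i _ => by rw [← hw i]]
      exact h0
    have hsplit : ∑ i, w i * lapBar A i j
        = (∑ i, w i * Matrix.diagonal (inDeg A) i j) - ∑ i, w i * |A i j| := by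
      rw [← Finset.sum_sub_distrib]
      refine Finset.sum_congr rfl fun i _ => ?_
      simp [lapBar, Matrix.sub_apply]
      ring
    have hdiagsum : ∑ i, w i * Matrix.diagonal (inDeg A) i j = w j * inDeg A j := by
      rw [Finset.sum_eq_single j]
      · simp
      · intro b _ hb
        rw [Matrix.diagonal_apply_ne (inDeg A) hb, mul_zero]
      · intro h; exact absurd (Finset.mem_univ j) h
    rw [hsplit, hdiagsum] at h0'
    linarith
  -- expand LHS
  have hLHS : PhiE A x
      = (∑ i, ∑ j, w i * |A i j| * x i ^ 2) + (∑ i, ∑ j, w i * |A i j| * x j ^ 2)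
        - 2 * ∑ i, ∑ j, w i * A i j * (x i * x j) := by
    rw [PhiE]
    rw [show (∑ i, ∑ j, minorDet A i * |A i j| * (x i - Real.sign (A i j) * x j) ^ 2)
        = ∑ i, ∑ j, (w i * |A i j| * x i ^ 2 + w i * |A i j| * x j ^ 2
            - 2 * (w i * A i j * (x i * x j))) from
      Finset.sum_congr rfl fun i _ => Finset.sum_congr rfl fun j _ => expand_term _ _ _ _]
    simp only [Finset.sum_add_distrib, Finset.sum_sub_distrib, ← Finset.mul_sum]
  have hS1 : ∑ i, ∑ j, w i * |A i j| * x i ^ 2 = ∑ i, w i * inDeg A i * x i ^ 2 := by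
    refine Finset.sum_congr rfl fun i _ => ?_
    rw [inDeg, Finset.mul_sum, Finset.sum_mul]
  have hS2 : ∑ i, ∑ j, w i * |A i j| * x j ^ 2 = ∑ i, w i * inDeg A i * x i ^ 2 := by
    rw [Finset.sum_comm]
    refine Finset.sum_congr rfl fun j _ => ?_
    rw [show (∑ i, w i * |A i j| * x j ^ 2) = (∑ i, w i * |A i j|) * x j ^ 2 from
      (Finset.sum_mul _ _ _).symm, hkey j]
  -- expand RHS
  have hRHS : x ⬝ᵥ ((Wmat A * lapOf A + (lapOf A)ᵀ * Wmat A) *ᵥ x)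
      = ∑ i, ∑ j, (x i * (w i * lapOf A i j * x j) + x i * (lapOf A j i * w j * x j)) := by
    rw [dotProduct, Finset.sum_congr rfl fun i _ => rfl]
    refine Finset.sum_congr rfl fun i _ => ?_
    rw [Matrix.mulVec, dotProduct, Finset.mul_sum]
    refine Finset.sum_congr rfl fun j _ => ?_
    rw [Matrix.add_apply, Wmat, Matrix.diagonal_mul, Matrix.mul_diagonal,
      Matrix.transpose_apply]
    ring
  have hsecond : ∑ i, ∑ j, x i * (lapOf A j i * w j * x j)
      = ∑ i, ∑ j, x i * (w i * lapOf A i j * x j) := by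
    rw [Finset.sum_comm]
    refine Finset.sum_congr rfl fun i _ => Finset.sum_congr rfl fun j _ => by ring
  have hlap : ∀ i, ∑ j, x i * (w i * lapOf A i j * x j)
      = w i * inDeg A i * x i ^ 2 - ∑ j, w i * A i j * (x i * x j) := by
    intro i
    have : ∀ j, x i * (w i * lapOf A i j * x j)
        = x i * (w i * Matrix.diagonal (inDeg A) i j * x j) - w i * A i j * (x i * x j) := by
      intro j
      simp only [lapOf, Matrix.sub_apply]
      ring
    rw [Finset.sum_congr rfl fun j _ => this j, Finset.sum_sub_distrib]
    congr 1
    rw [Finset.sum_eq_single i]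
    · simp [Matrix.diagonal_apply_eq]; ring
    · intro b _ hb
      simp [Matrix.diagonal_apply_ne _ (Ne.symm hb)]
    · intro h; exact absurd (Finset.mem_univ i) h
  have hfirst : ∑ i, ∑ j, x i * (w i * lapOf A i j * x j)
      = (∑ i, w i * inDeg A i * x i ^ 2) - ∑ i, ∑ j, w i * A i j * (x i * x j) := by
    rw [← Finset.sum_sub_distrib]
    exact Finset.sum_congr rfl fun i _ => hlap i
  have hRHS2 : ∑ i, ∑ j, (x i * (w i * lapOf A i j * x j) + x i * (lapOf A j i * w j * x j))
      = 2 * ∑ i, ∑ j, x i * (w i * lapOf A i j * x j) := by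
    simp only [Finset.sum_add_distrib]
    rw [hsecond]; ring
  rw [hLHS, hS1, hS2, hRHS, hRHS2, hfirst]
  ring
end
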